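/- arXiv:1209.6013 — 2 statements merged into one kernel-verified Lean document; each statement's English description precedes it below -/
import Mathlib

section
/- Let α ∈ (0,1) be irrational and m a positive integer with {mα} > 1/2. Then the Sturmian word s_{α,0} contains an abelian power of period m and exponent k ≥ 2 if and only if 1 - {mα} < 1/k. -/
open scoped Classical

/-- The Parikh vector (number of `a`'s, number of `b`'s) of the length-`m` factor of the
Sturmian word `s_{α,0}` starting at position `n`, where the letter at position `p ≥ 1` is
`a` iff `{pα} ≥ {-α} = 1 - α`. -/
noncomputable def sturmParikh (α : ℝ) (n m : ℕ) : ℕ × ℕ :=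
  (((Finset.range m).filter fun i => 1 - α ≤ Int.fract (((n + i : ℕ) : ℝ) * α)).card,
   ((Finset.range m).filter fun i => Int.fract (((n + i : ℕ) : ℝ) * α) < 1 - α).card)

/-- The factor of `s_{α,0}` of length `k*m` starting at position `n` is an abelian power
of period `m` and exponent `k`: its `k` consecutive blocks of length `m` share the same
Parikh vector. -/
noncomputable def HasAbelianPowerAt (α : ℝ) (n m k : ℕ) : Prop :=
  ∀ j < k, sturmParikh α (n + j * m) m = sturmParikh α n m

/-- The Sturmian word `s_{α,0}` contains an abelian power of period `m` and exponent `k`. -/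
noncomputable def HasAbelianPower (α : ℝ) (m k : ℕ) : Prop :=
  ∃ n : ℕ, 1 ≤ n ∧ HasAbelianPowerAt α n m k

/- auxiliary lemmas -/

lemma aux_fract_add (x y : ℝ) : Int.fract (x + y) = Int.fract (Int.fract x + Int.fract y) := by
  have h : Int.fract x + Int.fract y = (x + y) - ((⌊x⌋ + ⌊y⌋ : ℤ) : ℝ) := by
    simp only [Int.fract]; push_cast; ring
  rw [h, Int.fract_sub_intCast]

lemma aux_floor_add_left (x y : ℝ) : ⌊x + y⌋ = ⌊x⌋ + ⌊Int.fract x + y⌋ := by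
  conv_lhs => rw [← Int.floor_add_fract x, add_assoc]
  rw [add_comm ((⌊x⌋ : ℝ)) _, Int.floor_add_intCast, add_comm]

/-- count of a's in the window of length m starting at n, as an integer -/
lemma aux_acount (α : ℝ) (hα : α ∈ Set.Ioo (0:ℝ) 1) (n m : ℕ) :
    ((((Finset.range m).filter fun i => 1 - α ≤ Int.fract (((n + i : ℕ) : ℝ) * α)).card : ℤ))
      = ⌊((n + m : ℕ) : ℝ) * α⌋ - ⌊((n : ℕ) : ℝ) * α⌋ := by
  obtain ⟨hα0, hα1⟩ := hα
  have key : ∀ i, (((if 1 - α ≤ Int.fract (((n + i : ℕ) : ℝ) * α) then 1 else 0 : ℕ)) : ℤ)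
      = (fun j => ⌊((n + j : ℕ) : ℝ) * α⌋) (i+1) - (fun j => ⌊((n + j : ℕ) : ℝ) * α⌋) i := by
    intro i
    simp only
    have hx : ((n + (i+1) : ℕ) : ℝ) * α = ((n + i : ℕ) : ℝ) * α + α := by push_cast; ring
    rw [hx, aux_floor_add_left]
    set f := Int.fract (((n + i : ℕ) : ℝ) * α) with hf
    have h0 : 0 ≤ f := Int.fract_nonneg _
    have h1 : f < 1 := Int.fract_lt_one _
    by_cases hc : 1 - α ≤ f
    · have h2 : ⌊f + α⌋ = 1 := by
        refine Int.floor_eq_iff.mpr ⟨?_, ?_⟩ <;> push_cast <;> linarith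
      rw [h2]; simp [hc]
    · have h2 : ⌊f + α⌋ = 0 := by
        refine Int.floor_eq_iff.mpr ⟨?_, ?_⟩ <;> push_cast <;> linarith
      rw [h2]; simp [hc]
  calc ((((Finset.range m).filter fun i =>
          1 - α ≤ Int.fract (((n + i : ℕ) : ℝ) * α)).card : ℤ))
      = ∑ i ∈ Finset.range m,
          (((if 1 - α ≤ Int.fract (((n + i : ℕ) : ℝ) * α) then 1 else 0 : ℕ)) : ℤ) := by
        rw [Finset.card_filter]; exact Nat.cast_sum _ _
    _ = ∑ i ∈ Finset.range m,
          ((fun j => ⌊((n + j : ℕ) : ℝ) * α⌋) (i+1) - (fun j => ⌊((n + j : ℕ) : ℝ) * α⌋) i) :=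
        Finset.sum_congr rfl fun i _ => key i
    _ = (fun j => ⌊((n + j : ℕ) : ℝ) * α⌋) m - (fun j => ⌊((n + j : ℕ) : ℝ) * α⌋) 0 :=
        Finset.sum_range_sub (fun j => ⌊((n + j : ℕ) : ℝ) * α⌋) m
    _ = _ := by norm_num

/-- the a-count depends only on the indicator of `1 - {mα} ≤ {nα}` -/
lemma aux_acount_ind (α : ℝ) (hα : α ∈ Set.Ioo (0:ℝ) 1) (n m : ℕ) :
    ((((Finset.range m).filter fun i => 1 - α ≤ Int.fract (((n + i : ℕ) : ℝ) * α)).card : ℤ))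
      = ⌊(m : ℝ) * α⌋ +
        (if 1 - Int.fract ((m:ℝ) * α) ≤ Int.fract ((n:ℝ) * α) then 1 else 0) := by
  rw [aux_acount α hα n m]
  have hx : ((n + m : ℕ) : ℝ) * α = (m : ℝ) * α + (n : ℝ) * α := by push_cast; ring
  rw [hx, aux_floor_add_left]
  set θ := Int.fract ((n:ℝ) * α) with hθ
  set β := Int.fract ((m:ℝ) * α) with hβ
  have hθ0 : 0 ≤ θ := Int.fract_nonneg _
  have hθ1 : θ < 1 := Int.fract_lt_one _
  have hβ0 : 0 ≤ β := Int.fract_nonneg _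
  have hβ1 : β < 1 := Int.fract_lt_one _
  have hsplit : ⌊β + (n:ℝ) * α⌋ = ⌊((n:ℝ)*α)⌋ + ⌊β + θ⌋ := by
    rw [add_comm β, aux_floor_add_left, add_comm θ]
  rw [hsplit]
  by_cases hc : 1 - β ≤ θ
  · have h2 : ⌊β + θ⌋ = 1 := by
      refine Int.floor_eq_iff.mpr ⟨?_, ?_⟩ <;> push_cast <;> linarith
    rw [h2]; simp [hc]; ring
  · have h2 : ⌊β + θ⌋ = 0 := by
      refine Int.floor_eq_iff.mpr ⟨?_, ?_⟩ <;> push_cast <;> linarith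
    rw [h2]; simp [hc]


/-- Parikh vectors of two windows agree iff the indicator agrees. -/
lemma aux_parikh_iff (α : ℝ) (hα : α ∈ Set.Ioo (0:ℝ) 1) (n n' m : ℕ) :
    sturmParikh α n' m = sturmParikh α n m ↔
      (1 - Int.fract ((m:ℝ)*α) ≤ Int.fract ((n':ℝ)*α) ↔
        1 - Int.fract ((m:ℝ)*α) ≤ Int.fract ((n:ℝ)*α)) := by
  set c : ℕ → ℕ := fun q =>
    ((Finset.range m).filter fun i => 1 - α ≤ Int.fract (((q + i : ℕ) : ℝ) * α)).card with hc
  set d : ℕ → ℕ := fun q =>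
    ((Finset.range m).filter fun i => Int.fract (((q + i : ℕ) : ℝ) * α) < 1 - α).card with hd
  have hcd : ∀ q, c q + d q = m := by
    intro q
    have h := Finset.card_filter_add_card_filter_not (s := Finset.range m)
      (p := fun i => 1 - α ≤ Int.fract (((q + i : ℕ) : ℝ) * α))
    have hset : ((Finset.range m).filter fun i =>
          ¬ (1 - α ≤ Int.fract (((q + i : ℕ) : ℝ) * α)))
        = ((Finset.range m).filter fun i => Int.fract (((q + i : ℕ) : ℝ) * α) < 1 - α) :=
      Finset.filter_congr fun i _ => by rw [not_le]
    rw [hset, Finset.card_range] at h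
    exact h
  have hmk : sturmParikh α n' m = sturmParikh α n m ↔ c n' = c n := by
    unfold sturmParikh
    rw [Prod.mk.injEq]
    constructor
    · exact fun h => h.1
    · intro h
      refine ⟨h, ?_⟩
      have h1 := hcd n'
      have h2 := hcd n
      simp only [hc, hd] at h h1 h2 ⊢
      omega
  rw [hmk]
  constructor
  · intro h
    have h1 : (c n' : ℤ) = c n := by exact_mod_cast h
    rw [hc] at h1
    simp only at h1
    rw [aux_acount_ind α hα n' m, aux_acount_ind α hα n m] at h1
    by_cases p1 : 1 - Int.fract ((m:ℝ)*α) ≤ Int.fract ((n':ℝ)*α) <;>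
      by_cases p2 : 1 - Int.fract ((m:ℝ)*α) ≤ Int.fract ((n:ℝ)*α) <;>
      simp [p1, p2] at h1 ⊢ <;> tauto
  · intro h
    have h1 : (c n' : ℤ) = c n := by
      rw [hc]; simp only
      rw [aux_acount_ind α hα n' m, aux_acount_ind α hα n m, if_congr h rfl rfl]
    exact_mod_cast h1

lemma aux_step_down (α : ℝ) (m p : ℕ)
    (h : 1 - Int.fract ((m:ℝ)*α) ≤ Int.fract ((p:ℝ)*α)) :
    Int.fract (((p + m : ℕ) : ℝ) * α)
      = Int.fract ((p:ℝ)*α) - (1 - Int.fract ((m:ℝ)*α)) := by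
  have hx : ((p + m : ℕ) : ℝ) * α = (p:ℝ)*α + (m:ℝ)*α := by push_cast; ring
  rw [hx, aux_fract_add]
  set θ := Int.fract ((p:ℝ)*α)
  set β := Int.fract ((m:ℝ)*α)
  have hθ1 : θ < 1 := Int.fract_lt_one _
  have hβ1 : β < 1 := Int.fract_lt_one _
  have he : θ + β = (θ - (1 - β)) + 1 := by ring
  rw [he, Int.fract_add_one]
  exact Int.fract_eq_self.mpr ⟨by linarith, by linarith⟩

lemma aux_step_up (α : ℝ) (m p : ℕ)
    (h : Int.fract ((p:ℝ)*α) < 1 - Int.fract ((m:ℝ)*α)) :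
    Int.fract (((p + m : ℕ) : ℝ) * α)
      = Int.fract ((p:ℝ)*α) + Int.fract ((m:ℝ)*α) := by
  have hx : ((p + m : ℕ) : ℝ) * α = (p:ℝ)*α + (m:ℝ)*α := by push_cast; ring
  rw [hx, aux_fract_add]
  have h0 : 0 ≤ Int.fract ((p:ℝ)*α) := Int.fract_nonneg _
  have h0' : 0 ≤ Int.fract ((m:ℝ)*α) := Int.fract_nonneg _
  exact Int.fract_eq_self.mpr ⟨by linarith, by linarith⟩

/-- density: for irrational α, some positive multiple has fractional part above any c < 1. -/
lemma aux_exists_fract_gt (α : ℝ) (hirr : Irrational α) (c : ℝ) (hc0 : 0 ≤ c) (hc1 : c < 1) :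
    ∃ n : ℕ, 1 ≤ n ∧ c < Int.fract ((n:ℝ) * α) := by
  set S : AddSubgroup ℝ := AddSubgroup.closure {1, α} with hS
  have hdense : Dense (S : Set ℝ) := by
    rcases S.dense_or_cyclic with h | ⟨a, ha⟩
    · exact h
    · exfalso
      have h1 : (1:ℝ) ∈ S := AddSubgroup.subset_closure (by simp)
      have h2 : α ∈ S := AddSubgroup.subset_closure (by simp)
      rw [ha, ← AddSubgroup.zmultiples_eq_closure, AddSubgroup.mem_zmultiples_iff] at h1 h2
      obtain ⟨cz, hcz⟩ := h1
      obtain ⟨dz, hdz⟩ := h2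
      simp only [zsmul_eq_mul] at hcz hdz
      have hcz0 : (cz:ℝ) ≠ 0 := by
        intro h0; rw [h0, zero_mul] at hcz; exact one_ne_zero hcz.symm
      refine hirr ⟨(dz : ℚ) / (cz : ℚ), ?_⟩
      push_cast
      rw [div_eq_iff hcz0]
      have h3 : α * (cz:ℝ) = (dz:ℝ) * ((cz:ℝ) * a) := by rw [← hdz]; ring
      rw [hcz, mul_one] at h3
      linarith
  set ε := 1 - c with hε
  have hε0 : 0 < ε := by linarith
  obtain ⟨g, hgS, hg0, hgε⟩ : ∃ g ∈ (S : Set ℝ), g ∈ Set.Ioo 0 ε :=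
    hdense.exists_between hε0
  have hg1 : g < 1 := by
    have hε1 : ε ≤ 1 := by rw [hε]; linarith
    linarith
  rw [hS, SetLike.mem_coe, AddSubgroup.mem_closure_pair] at hgS
  obtain ⟨q, p, hqp⟩ := hgS
  simp only [zsmul_eq_mul, mul_one] at hqp
  have hp0 : p ≠ 0 := by
    intro h0
    rw [h0] at hqp
    simp at hqp
    have : g = (q:ℝ) := by linarith [hqp]
    rw [this] at hg0 hg1
    have hq1 : 1 ≤ q := by exact_mod_cast hg0
    have : (1:ℝ) ≤ (q:ℝ) := by exact_mod_cast hq1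
    linarith
  have hgirr : Irrational g := by
    rw [← hqp]
    exact ((hirr.intCast_mul hp0).intCast_add q)
  rcases lt_or_gt_of_ne hp0 with hplt | hpgt
  · -- p < 0 : take n = -p, fract(nα) = 1 - g
    refine ⟨(-p).toNat, ?_, ?_⟩
    · have : 1 ≤ -p := by omega
      omega
    · have h2 : ((-p).toNat : ℤ) = -p := Int.toNat_of_nonneg (by omega)
      have hcast : (((-p).toNat : ℕ) : ℝ) = ((-p : ℤ) : ℝ) := by exact_mod_cast h2
      rw [hcast]
      have hna : ((-p : ℤ) : ℝ) * α = (q : ℝ) - g := by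
        push_cast
        rw [← hqp]; ring
      rw [hna]
      have : (q:ℝ) - g = -g + (q:ℤ) := by push_cast; ring
      rw [this, Int.fract_add_intCast]
      have hfg : Int.fract g = g := Int.fract_eq_self.mpr ⟨le_of_lt hg0, hg1⟩
      rw [Int.fract_neg (by rw [hfg]; exact ne_of_gt hg0), hfg]
      linarith
  · -- p > 0 : take n = N * p with N = ⌊1/g⌋
    set N := ⌊1 / g⌋ with hN
    have hN1 : 1 ≤ N := by
      rw [hN, Int.le_floor]
      rw [le_div_iff₀ hg0]
      push_cast; linarith
    have hNg_le : (N:ℝ) * g ≤ 1 := by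
      have := Int.floor_le (1 / g)
      rw [← hN] at this
      calc (N:ℝ) * g ≤ (1/g) * g := by
            apply mul_le_mul_of_nonneg_right this (le_of_lt hg0)
        _ = 1 := by field_simp
    have hNg_ne : (N:ℝ) * g ≠ 1 := by
      intro he
      have hN0 : (N:ℝ) ≠ 0 := by
        have : (1:ℝ) ≤ (N:ℝ) := by exact_mod_cast hN1
        linarith
      have : g = 1 / (N:ℝ) := by field_simp at he ⊢; linarith [he]
      refine hgirr ⟨1 / (N:ℚ), ?_⟩
      push_cast
      exact this.symm
    have hNg1 : (N:ℝ) * g < 1 := lt_of_le_of_ne hNg_le hNg_ne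
    have hNg_gt : 1 - g < (N:ℝ) * g := by
      have := Int.lt_floor_add_one (1 / g)
      rw [← hN] at this
      have h2 : 1 / g * g < ((N:ℝ) + 1) * g := by
        apply mul_lt_mul_of_pos_right this hg0
      rw [one_div_mul_cancel (ne_of_gt hg0)] at h2
      linarith
    refine ⟨(N * p).toNat, ?_, ?_⟩
    · have : 1 ≤ N * p := by nlinarith
      omega
    · have hNp : 1 ≤ N * p := by nlinarith
      have h' : ((N * p).toNat : ℤ) = N * p := Int.toNat_of_nonneg (by omega)
      have hcast : (((N * p).toNat : ℕ) : ℝ) = ((N * p : ℤ) : ℝ) := by exact_mod_cast h'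
      rw [hcast]
      have hna : ((N * p : ℤ) : ℝ) * α = (N:ℝ) * g + (-(N * q) : ℤ) := by
        push_cast
        rw [← hqp]; ring
      rw [hna, Int.fract_add_intCast]
      have hNg0 : 0 ≤ (N:ℝ) * g := by positivity
      rw [Int.fract_eq_self.mpr ⟨hNg0, hNg1⟩]
      linarith

/-- For irrational `α ∈ (0,1)` and `m ≥ 1` with `{mα} > 1/2`, the word
`s_{α,0}` contains an abelian power of period `m` and exponent `k ≥ 2` iff
`1 - {mα} < 1/k`. -/
theorem hasAbelianPower_iff_of_fract_gt_half
    (α : ℝ) (hα : α ∈ Set.Ioo (0 : ℝ) 1) (hirr : Irrational α)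
    (m : ℕ) (hm : 0 < m) (hhalf : 1 / 2 < Int.fract ((m : ℝ) * α))
    (k : ℕ) (hk : 2 ≤ k) :
    HasAbelianPower α m k ↔ 1 - Int.fract ((m : ℝ) * α) < 1 / (k : ℝ) := by
  set β := Int.fract ((m : ℝ) * α) with hβ
  set δ := 1 - β with hδdef
  have hβ1 : β < 1 := Int.fract_lt_one _
  have hδ0 : 0 < δ := by rw [hδdef]; linarith
  have hδhalf : δ < 1/2 := by rw [hδdef]; linarith
  have hk0 : (0:ℝ) < (k:ℝ) := by positivity
  have hk1 : (1:ℝ) ≤ (k:ℝ) := by exact_mod_cast Nat.one_le_of_lt hk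
  constructor
  · rintro ⟨n, hn1, hA⟩
    have hiff : ∀ j < k, (δ ≤ Int.fract (((n + j * m : ℕ) : ℝ) * α)
        ↔ δ ≤ Int.fract ((n : ℝ) * α)) := fun j hj =>
      (aux_parikh_iff α hα n (n + j * m) m).mp (hA j hj)
    by_cases hb : δ ≤ Int.fract ((n : ℝ) * α)
    · have claim : ∀ j, j < k →
          Int.fract (((n + j * m : ℕ) : ℝ) * α) = Int.fract ((n : ℝ) * α) - j * δ := by
        intro j
        induction j with
        | zero => intro _; simp
        | succ j ih =>
          intro hj
          have hj' : j < k := Nat.lt_of_succ_lt hj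
          have h1 := ih hj'
          have h2 : δ ≤ Int.fract (((n + j * m : ℕ) : ℝ) * α) := (hiff j hj').mpr hb
          have he : n + (j + 1) * m = (n + j * m) + m := by ring
          rw [he, aux_step_down α m (n + j * m) h2, h1]
          push_cast; ring
      have hk1' : k - 1 < k := by omega
      have h3 := (hiff (k - 1) hk1').mpr hb
      rw [claim (k - 1) hk1'] at h3
      have hθ1 : Int.fract ((n : ℝ) * α) < 1 := Int.fract_lt_one _
      have hcast : ((k - 1 : ℕ) : ℝ) = (k : ℝ) - 1 := by
        have : 1 ≤ k := by omega
        push_cast [Nat.cast_sub this]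
        ring
      rw [hcast] at h3
      rw [lt_div_iff₀ hk0]
      nlinarith
    · exfalso
      push_neg at hb
      have h1 : 1 < k := by omega
      have h3 : Int.fract (((n + 1 * m : ℕ) : ℝ) * α)
          = Int.fract ((n : ℝ) * α) + β := by
        rw [show n + 1 * m = n + m by ring]
        exact aux_step_up α m n hb
      have h4 : δ ≤ Int.fract (((n + 1 * m : ℕ) : ℝ) * α) := by
        rw [h3]
        have := Int.fract_nonneg ((n : ℝ) * α)
        linarith
      have h5 := (hiff 1 h1).mp h4
      linarith
  · intro h
    have hkδ : (k : ℝ) * δ < 1 := by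
      rw [lt_div_iff₀ hk0] at h
      linarith [h]
    obtain ⟨n, hn1, hθ⟩ := aux_exists_fract_gt α hirr ((k : ℝ) * δ)
      (by positivity) hkδ
    have claim : ∀ j, j < k →
        Int.fract (((n + j * m : ℕ) : ℝ) * α) = Int.fract ((n : ℝ) * α) - j * δ := by
      intro j
      induction j with
      | zero => intro _; simp
      | succ j ih =>
        intro hj
        have hj' : j < k := Nat.lt_of_succ_lt hj
        have h1 := ih hj'
        have hjk : ((j : ℝ) + 1) ≤ (k : ℝ) := by exact_mod_cast le_of_lt hj
        have h2 : δ ≤ Int.fract (((n + j * m : ℕ) : ℝ) * α) := by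
          rw [h1]
          nlinarith
        have he : n + (j + 1) * m = (n + j * m) + m := by ring
        rw [he, aux_step_down α m (n + j * m) h2, h1]
        push_cast; ring
    refine ⟨n, hn1, fun j hj => (aux_parikh_iff α hα n (n + j * m) m).mpr ?_⟩
    have hjk : ((j : ℝ) + 1) ≤ (k : ℝ) := by exact_mod_cast Nat.succ_le_of_lt hj
    have hl : δ ≤ Int.fract (((n + j * m : ℕ) : ℝ) * α) := by
      rw [claim j hj]
      nlinarith
    have hr : δ ≤ Int.fract ((n : ℝ) * α) := by nlinarith
    exact iff_of_true hl hr
end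

section
/- For j > 1, the longest abelian power of period F_j in the Fibonacci infinite word that starts at a position i ≤ F_j has an occurrence starting at position F_j, and its exponent equals ⌊φ F_j + F_{j-1}⌋ - 1, which equals F_{j+1} + F_{j-1} - 1 if j is even and F_{j+1} + F_{j-1} - 2 if j is odd. -/
open scoped Classical

/-- Fibonacci numbers with the indexing `F 0 = 1`, `F 1 = 1`, `F (j+1) = F j + F (j-1)`. -/
def F (j : ℕ) : ℕ := Nat.fib (j + 1)

set_option maxHeartbeats 1000000

noncomputable def A : ℝ := (Real.sqrt 5 - 1) / 2
noncomputable def G : ℝ := (1 + Real.sqrt 5) / 2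

lemma s5sq : Real.sqrt 5 ^ 2 = 5 := Real.sq_sqrt (by norm_num)
lemma s5pos : 0 < Real.sqrt 5 := Real.sqrt_pos.mpr (by norm_num)
lemma s5gt : 2 < Real.sqrt 5 := by nlinarith [s5sq, s5pos]
lemma A0 : 0 < A := by unfold A; linarith [s5gt]
lemma Alt1 : A < 1 := by unfold A; nlinarith [s5sq, s5pos]
lemma Asq : A^2 = 1 - A := by unfold A; nlinarith [s5sq]
lemma AG : A * G = 1 := by unfold A G; nlinarith [s5sq]
lemma GA : G = A + 1 := by unfold A G; ring
lemma GS : G + A = Real.sqrt 5 := by unfold A G; ring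
lemma Gsq : G^2 = G + 1 := by rw [GA]; nlinarith [Asq]
lemma powA_small {k : ℕ} (hk : 3 ≤ k) : A^k ≤ 1/4 := by
  have h1 : A^k ≤ A^3 := pow_le_pow_of_le_one A0.le Alt1.le hk
  nlinarith [Asq, A0, Alt1]

lemma fibA : ∀ t : ℕ, (Nat.fib (t+1) : ℝ) * A = (Nat.fib t : ℝ) - (-A)^(t+1) := by
  intro t
  induction t using Nat.twoStepInduction with
  | zero => simp
  | one => simp [Nat.fib]; nlinarith [Asq]
  | more t ih1 ih2 =>
    have h2 : (Nat.fib (t+2) : ℝ) = (Nat.fib t : ℝ) + (Nat.fib (t+1) : ℝ) := by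
      rw [Nat.fib_add_two]; push_cast; ring
    have h3 : (Nat.fib (t+2+1) : ℝ) = (Nat.fib (t+1) : ℝ) + (Nat.fib (t+2) : ℝ) := by
      rw [show t+2+1 = (t+1)+2 from rfl, Nat.fib_add_two]; push_cast; ring
    linear_combination A * h3 + ih2 + ih1 - h2 + (-A)^(t+1) * Asq

lemma fibG : ∀ t : ℕ, G^(t+1) = (Nat.fib (t+1) : ℝ) * G + (Nat.fib t : ℝ) := by
  intro t
  induction t with
  | zero => simp
  | succ s ih =>
    rw [Nat.fib_add_two]
    push_cast
    have : G^(s+1+1) = G^(s+1) * G := by ring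
    rw [this, ih]
    nlinarith [Gsq]

lemma fibS : ∀ t : ℕ, (Nat.fib t : ℝ) * Real.sqrt 5 = G^t - (-A)^t := by
  intro t
  cases t with
  | zero => simp
  | succ s =>
    have h1 := fibA s
    have h2 := fibG s
    have h3 := GS
    linear_combination h1 - h2 - (Nat.fib (s+1) : ℝ) * GS

lemma key (t p : ℕ) (hp : 1 ≤ p) (hpt : (p:ℝ) ≤ (Nat.fib t : ℝ)) :
    A ^ t ≤ Int.fract ((p:ℝ) * A) := by
  by_contra hcon
  push_neg at hcon
  have hp1 : (1:ℝ) ≤ (p:ℝ) := by exact_mod_cast hp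
  have hAmG : A - G = -1 := by rw [GA]; ring
  obtain ⟨f, n, hfr, hf0, hf1, hxn⟩ :
      ∃ (f : ℝ) (n : ℤ), f = Int.fract ((p:ℝ)*A) ∧ 0 ≤ f ∧ f < 1 ∧ (p:ℝ)*A = (n:ℝ) + f :=
    ⟨_, ⌊(p:ℝ)*A⌋, rfl, Int.fract_nonneg _, Int.fract_lt_one _, (Int.floor_add_fract _).symm⟩
  rw [← hfr] at hcon
  have hprod : f * ((p:ℝ) * Real.sqrt 5 - f) = (((p:ℤ)^2 - p*n - n^2 : ℤ) : ℝ) := by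
    push_cast
    have hf : f = (p:ℝ)*A - n := by linarith
    rw [hf, ← GS]
    linear_combination ((p:ℝ)^2) * AG + ((p:ℝ)*(n:ℝ)) * hAmG
  have hsge : (0:ℝ) ≤ (p:ℝ) * Real.sqrt 5 - f := by nlinarith [s5gt]
  have hge0 : (0:ℤ) ≤ ((p:ℤ)^2 - p*n - n^2) := by
    have : (0:ℝ) ≤ (((p:ℤ)^2 - p*n - n^2 : ℤ) : ℝ) := hprod ▸ mul_nonneg hf0 hsge
    exact_mod_cast this
  have hNne : ((p:ℤ)^2 - p*n - n^2) ≠ 0 := by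
    intro h0
    rw [h0] at hprod
    push_cast at hprod
    rcases mul_eq_zero.mp hprod with h | h
    · have hx0 : (p:ℝ) * A = (n:ℝ) := by linarith
      have hpne : ((p:ℝ)) ≠ 0 := by linarith
      have h5 : Real.sqrt 5 = ((2*n + p : ℤ) : ℝ) / ((p : ℝ)) := by
        field_simp
        unfold A at hx0
        push_cast
        linarith
      have hirr : Irrational (Real.sqrt 5) := by
        simpa using Nat.Prime.irrational_sqrt (p := 5) (by norm_num)
      rw [h5] at hirr
      have heq : ((2*n + p : ℤ) : ℝ) / ((p:ℝ)) = ((((2*n + p : ℤ) : ℚ) / ((p:ℕ) : ℚ) : ℚ) : ℝ) := by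
        push_cast; ring
      rw [heq] at hirr
      exact Rat.not_irrational _ hirr
    · nlinarith [s5gt]
  have hN1 : (1:ℝ) ≤ (((p:ℤ)^2 - p*n - n^2 : ℤ) : ℝ) := by
    have : (1:ℤ) ≤ ((p:ℤ)^2 - p*n - n^2) := lt_of_le_of_ne hge0 (Ne.symm hNne)
    exact_mod_cast this
  have hct1 : A^t ≤ 1 := pow_le_one₀ A0.le Alt1.le
  have hct0 : 0 < A^t := pow_pos A0 t
  have mono : f * ((p:ℝ) * Real.sqrt 5 - f) < A^t * ((p:ℝ) * Real.sqrt 5 - A^t) := by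
    have hpos : (0:ℝ) < (p:ℝ)*Real.sqrt 5 - A^t - f := by nlinarith [s5gt]
    have hexp : A^t * ((p:ℝ) * Real.sqrt 5 - A^t) - f * ((p:ℝ) * Real.sqrt 5 - f)
        = (A^t - f) * ((p:ℝ)*Real.sqrt 5 - A^t - f) := by ring
    nlinarith [mul_pos (sub_pos.mpr hcon) hpos]
  have hAGt : A^t * G^t = 1 := by rw [← mul_pow, AG, one_pow]
  have last : A^t * ((p:ℝ) * Real.sqrt 5 - A^t) ≤ 1 := by
    have hle : A^t * ((p:ℝ) * Real.sqrt 5 - A^t) ≤ A^t * ((Nat.fib t : ℝ) * Real.sqrt 5 - A^t) := by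
      have : (p:ℝ) * Real.sqrt 5 ≤ (Nat.fib t : ℝ) * Real.sqrt 5 :=
        mul_le_mul_of_nonneg_right hpt s5pos.le
      nlinarith [hct0]
    rw [fibS t] at hle
    rcases Nat.even_or_odd t with he | ho
    · rw [he.neg_pow] at hle; nlinarith [hAGt, pow_nonneg A0.le t]
    · rw [ho.neg_pow] at hle; nlinarith [hAGt, pow_nonneg A0.le t]
  linarith [hprod ▸ hN1]

lemma upper (j : ℕ) (ho : Odd j) (n : ℕ) (hn1 : 1 ≤ n) (hn2 : n ≤ Nat.fib (j+1)) :
    Int.fract ((n:ℝ)*A) ≤ 1 - A^(j+1) := by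
  by_contra h
  push_neg at h
  have hn1R : (1:ℝ) ≤ (n:ℝ) := by exact_mod_cast hn1
  have hx0 : (0:ℝ) ≤ (n:ℝ)*A := mul_nonneg (by positivity) A0.le
  obtain ⟨q, hq, hq0, hq1⟩ :
      ∃ q : ℤ, (n:ℝ)*A = (q:ℝ) + Int.fract ((n:ℝ)*A) ∧ 0 ≤ q ∧ (n:ℝ)*A < (q:ℝ) + 1 :=
    ⟨⌊(n:ℝ)*A⌋, (Int.floor_add_fract _).symm, Int.floor_nonneg.mpr hx0, Int.lt_floor_add_one _⟩
  obtain ⟨p, hpR⟩ : ∃ p : ℕ, (p:ℝ) = (q:ℝ) + 1 := by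
    refine ⟨q.toNat + 1, ?_⟩
    have h1 : ((q.toNat : ℤ) : ℝ) = (q:ℝ) := by rw [Int.toNat_of_nonneg hq0]
    push_cast at h1 ⊢
    linarith
  have hfr1 : Int.fract ((n:ℝ)*A) < 1 := Int.fract_lt_one _
  have h2 : (q:ℝ) + 1 - (n:ℝ)*A < A^(j+1) := by linarith
  have h2' : 0 < (q:ℝ) + 1 - (n:ℝ)*A := by linarith
  have G0 : (0:ℝ) < G := by unfold G; linarith [s5gt]
  have hGmul : ((n:ℝ)*A) * G = (n:ℝ) := by rw [mul_assoc, AG, mul_one]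
  have h3a : 0 < (p:ℝ)*G - (n:ℝ) := by rw [hpR, ← hGmul]; nlinarith
  have h3b : (p:ℝ)*G - (n:ℝ) < A^j := by
    have hstep : A^(j+1) * G = A^j := by rw [pow_succ, mul_assoc, AG, mul_one]
    rw [hpR, ← hGmul, ← hstep]
    nlinarith
  have h4 : Int.fract ((p:ℝ)*G) < A^j := by
    have hnle : (n:ℤ) ≤ ⌊(p:ℝ)*G⌋ := Int.le_floor.mpr (by push_cast; linarith)
    have heq : Int.fract ((p:ℝ)*G) = (p:ℝ)*G - (⌊(p:ℝ)*G⌋:ℝ) := rfl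
    have hc : ((n:ℤ):ℝ) ≤ (⌊(p:ℝ)*G⌋ : ℝ) := by exact_mod_cast hnle
    push_cast at hc
    rw [heq]
    linarith
  have h5 : Int.fract ((p:ℝ)*A) < A^j := by
    have he : (p:ℝ)*G = (p:ℝ)*A + (p:ℕ) := by rw [GA]; ring
    rw [he, Int.fract_add_natCast] at h4
    exact h4
  have hp1 : 1 ≤ p := by
    by_contra hc
    have : p = 0 := by omega
    rw [this] at hpR
    simp at hpR
    have : (q:ℝ) = -1 := by linarith
    have : (0:ℝ) ≤ (q:ℝ) := by exact_mod_cast hq0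
    linarith
  have hpj : (p:ℝ) ≤ (Nat.fib j : ℝ) := by
    have hnle : (n:ℝ) ≤ (Nat.fib (j+1) : ℝ) := by exact_mod_cast hn2
    have hm : (n:ℝ)*A ≤ (Nat.fib (j+1):ℝ)*A := by nlinarith [A0]
    have hfa := fibA j
    have heven : ((-A):ℝ)^(j+1) = A^(j+1) := (Odd.add_one ho).neg_pow A
    rw [heven] at hfa
    have hplt : (p:ℝ) < (Nat.fib j : ℝ) + 1 := by
      rw [hpR]
      nlinarith [pow_pos A0 (j+1)]
    have h1 : p < Nat.fib j + 1 := by exact_mod_cast hplt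
    have h2 : p ≤ Nat.fib j := by omega
    exact_mod_cast h2
  exact absurd h5 (not_lt.mpr (key j p hp1 hpj))

lemma fractA : Int.fract A = A := Int.fract_eq_self.mpr ⟨A0.le, Alt1⟩

lemma floor_add_ind (x y : ℝ) :
    ⌊x + y⌋ = ⌊x⌋ + ⌊y⌋ + if 1 ≤ Int.fract x + Int.fract y then 1 else 0 := by
  have hx0 := Int.fract_nonneg x
  have hy0 := Int.fract_nonneg y
  have hx1 := Int.fract_lt_one x
  have hy1 := Int.fract_lt_one y
  have hxy : x + y = ((⌊x⌋ + ⌊y⌋ : ℤ) : ℝ) + (Int.fract x + Int.fract y) := by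
    push_cast
    linear_combination (Int.floor_add_fract x).symm + (Int.floor_add_fract y).symm
  rw [hxy, Int.floor_intCast_add]
  split_ifs with h
  · have : ⌊Int.fract x + Int.fract y⌋ = 1 :=
      Int.floor_eq_iff.mpr ⟨by exact_mod_cast h, by push_cast; linarith⟩
    omega
  · push_neg at h
    have : ⌊Int.fract x + Int.fract y⌋ = 0 :=
      Int.floor_eq_iff.mpr ⟨by push_cast; linarith, by push_cast; linarith⟩
    omega

lemma floor_step (x : ℝ) :
    (if 1 - A ≤ Int.fract x then (1:ℤ) else 0) = ⌊x + A⌋ - ⌊x⌋ := by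
  rw [floor_add_ind x A, fractA]
  have hA : ⌊A⌋ = 0 := Int.floor_eq_iff.mpr ⟨by simpa using A0.le, by push_cast; linarith [Alt1]⟩
  rw [hA]
  have hiff : (1 - A ≤ Int.fract x) ↔ (1 ≤ Int.fract x + A) := by
    constructor <;> intro <;> linarith
  simp only [hiff]
  ring

lemma fst_eq (n m : ℕ) :
    ((sturmParikh A n m).1 : ℤ) = ⌊((n + m : ℕ) : ℝ) * A⌋ - ⌊((n : ℕ) : ℝ) * A⌋ := by
  unfold sturmParikh
  simp only
  rw [Finset.card_filter, Nat.cast_sum]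
  have step : ∀ i ∈ Finset.range m,
      ((((if 1 - A ≤ Int.fract (((n + i : ℕ) : ℝ) * A) then 1 else 0) : ℕ)) : ℤ)
      = ⌊((n + (i+1) : ℕ) : ℝ) * A⌋ - ⌊((n + i : ℕ) : ℝ) * A⌋ := by
    intro i _
    rw [Nat.cast_ite]
    simp only [Nat.cast_one, Nat.cast_zero]
    rw [floor_step (((n + i : ℕ) : ℝ) * A)]
    congr 2
    push_cast
    ring
  rw [Finset.sum_congr rfl step]
  rw [Finset.sum_range_sub (fun i => ⌊((n + i : ℕ) : ℝ) * A⌋) m]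
  norm_num

lemma sturm_eq_iff (n n' m : ℕ) :
    sturmParikh A n' m = sturmParikh A n m ↔ (sturmParikh A n' m).1 = (sturmParikh A n m).1 := by
  constructor
  · intro h; rw [h]
  · intro h
    have key : ∀ q : ℕ, (sturmParikh A q m).1 + (sturmParikh A q m).2 = m := by
      intro q
      unfold sturmParikh
      simp only
      have hfc : Finset.filter (fun i => Int.fract (((q + i:ℕ):ℝ) * A) < 1 - A) (Finset.range m)
          = Finset.filter (fun i => ¬ (1 - A ≤ Int.fract (((q + i:ℕ):ℝ) * A))) (Finset.range m) :=
        Finset.filter_congr (fun x _ => not_le.symm)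
      rw [hfc, Finset.card_filter_add_card_filter_not]
      exact Finset.card_range m
    have h1 := key n'
    have h2 := key n
    exact Prod.ext h (by omega)

lemma power_iff (n m k : ℕ) :
    HasAbelianPowerAt A n m k ↔ ∀ t < k,
      ((1:ℝ) ≤ Int.fract (((n + t*m : ℕ):ℝ)*A) + Int.fract ((m:ℝ)*A) ↔
       (1:ℝ) ≤ Int.fract (((n:ℕ):ℝ)*A) + Int.fract ((m:ℝ)*A)) := by
  have e : ∀ q : ℕ, ((sturmParikh A q m).1 : ℤ) = ⌊(m:ℝ)*A⌋ +
      (if (1:ℝ) ≤ Int.fract (((q:ℕ):ℝ)*A) + Int.fract ((m:ℝ)*A) then 1 else 0) := by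
    intro q
    rw [fst_eq]
    have hqm : ((q + m : ℕ) : ℝ) * A = ((q:ℕ):ℝ)*A + (m:ℝ)*A := by push_cast; ring
    rw [hqm, floor_add_ind]
    ring
  unfold HasAbelianPowerAt
  refine forall₂_congr fun t ht => ?_
  have habs : ∀ (c1 c2 : Prop),
      ((⌊(m:ℝ)*A⌋ + (if c1 then (1:ℤ) else 0) = ⌊(m:ℝ)*A⌋ + (if c2 then 1 else 0)) ↔ (c1 ↔ c2)) := by
    intro c1 c2
    constructor
    · intro h
      by_cases h1 : c1 <;> by_cases h2 : c2 <;>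
        simp only [h1, h2, if_true, if_false, iff_true, iff_false, not_true, not_false_iff] at h ⊢ <;>
        first | trivial | omega
    · intro h
      by_cases h1 : c1
      · rw [if_pos h1, if_pos (h.mp h1)]
      · rw [if_neg h1, if_neg (fun hc => h1 (h.mpr hc))]
  rw [sturm_eq_iff, ← Nat.cast_inj (R := ℤ), e, e, habs]

/-- For `j > 1`, in the Fibonacci infinite word (the Sturmian word of
slope `α = φ - 1`), the longest abelian power of period `F j` starting at a position
`i ≤ F j` has an occurrence starting at position `F j`, and its exponent equals
`⌊φ F_j + F_{j-1}⌋ - 1`, which is `F_{j+1} + F_{j-1} - 1` for even `j` and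
`F_{j+1} + F_{j-1} - 2` for odd `j`. -/
theorem fibonacci_longest_abelian_power (j : ℕ) (hj : 1 < j) :
    IsGreatest
      {k : ℕ | ∃ i : ℕ, 1 ≤ i ∧ i ≤ F j ∧
        HasAbelianPowerAt ((Real.sqrt 5 - 1) / 2) i (F j) k}
      (⌊(1 + Real.sqrt 5) / 2 * (F j : ℝ) + (F (j - 1) : ℝ)⌋₊ - 1) ∧
    HasAbelianPowerAt ((Real.sqrt 5 - 1) / 2) (F j) (F j)
      (⌊(1 + Real.sqrt 5) / 2 * (F j : ℝ) + (F (j - 1) : ℝ)⌋₊ - 1) ∧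
    ⌊(1 + Real.sqrt 5) / 2 * (F j : ℝ) + (F (j - 1) : ℝ)⌋₊ - 1 =
      (if Even j then F (j + 1) + F (j - 1) - 1 else F (j + 1) + F (j - 1) - 2) := by
  rw [show ((Real.sqrt 5 - 1) / 2 : ℝ) = A from rfl, show ((1 + Real.sqrt 5) / 2 : ℝ) = G from rfl]
  have hFj1 : F (j-1) = Nat.fib j := by unfold F; congr 1; omega
  have hFj2 : F (j+1) = Nat.fib (j+2) := rfl
  have hFcast : (F j : ℝ) = (Nat.fib (j+1) : ℝ) := rfl
  have hε0 : 0 < A^(j+1) := pow_pos A0 _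
  have hε4 : A^(j+1) ≤ 1/4 := powA_small (by omega)
  have hεG : A^(j+1) * G^(j+1) = 1 := by rw [← mul_pow, AG, one_pow]
  set ε := A^(j+1) with hε
  set L := Nat.fib (j+2) + Nat.fib j with hL
  have hL4 : 4 ≤ L := by
    have h1 : Nat.fib 4 ≤ Nat.fib (j+2) := Nat.fib_mono (by omega)
    have h2 : Nat.fib 2 ≤ Nat.fib j := Nat.fib_mono (by omega)
    have e4 : Nat.fib 4 = 3 := by decide
    have e2 : Nat.fib 2 = 1 := by decide
    omega
  have hL4R : (4:ℝ) ≤ (L:ℝ) := by exact_mod_cast hL4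
  have hgold : G * (F j : ℝ) + (F (j-1) : ℝ) = G^(j+1) := by
    rw [hFj1, hFcast, fibG j]; ring
  have hG1diff : G - A = 1 := by rw [GA]; ring
  have hLreal : (L:ℝ) = G^(j+1) + (-A)^(j+1) := by
    have h1 := fibG j
    have h2 := fibA j
    have h3 : (Nat.fib (j+2) : ℝ) = (Nat.fib j : ℝ) + (Nat.fib (j+1) : ℝ) := by
      rw [Nat.fib_add_two]; push_cast; ring
    rw [hL]; push_cast
    linear_combination h3 - h1 - h2 - (Nat.fib (j+1) : ℝ) * hG1diff
  have hFpos : 1 ≤ F j := Nat.fib_pos.mpr (by omega)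
  have hif : ∀ i : ℕ, (i:ℝ) * A = (⌊(i:ℝ)*A⌋ : ℝ) + Int.fract ((i:ℝ)*A) :=
    fun i => (Int.floor_add_fract _).symm
  rcases Nat.even_or_odd j with he | ho
  -- ===================== EVEN CASE =====================
  · have hnp : ((-A):ℝ)^(j+1) = -ε := by rw [(Even.add_one he).neg_pow]
    have hG1 : G^(j+1) = (L:ℝ) + ε := by rw [hLreal, hnp]; ring
    have hLe : (L:ℝ) * ε = 1 - ε^2 := by linear_combination hεG - ε * hG1
    have hfloor : ⌊G * (F j : ℝ) + (F (j-1) : ℝ)⌋₊ = L := by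
      rw [hgold, hG1]
      rw [Nat.floor_eq_iff (by linarith)]
      constructor
      · linarith
      · push_cast; linarith
    rw [hfloor, show L - 1 = L - 1 from rfl]
    have hfmA : (F j : ℝ) * A = (Nat.fib j : ℝ) + ε := by
      rw [hFcast, fibA j, hnp]; ring
    have hfr_m : Int.fract ((F j:ℝ)*A) = ε := by
      rw [hfmA, show (Nat.fib j : ℝ) + ε = ε + ((Nat.fib j : ℤ) : ℝ) from by push_cast; ring,
        Int.fract_add_intCast, Int.fract_eq_self.mpr ⟨hε0.le, by linarith⟩]
    have hpowm : HasAbelianPowerAt A (F j) (F j) (L - 1) := by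
      rw [power_iff]
      intro t ht
      have htR : (t:ℝ) + 2 ≤ (L:ℝ) := by exact_mod_cast (show t + 2 ≤ L by omega)
      have hfr_t : Int.fract (((F j + t * F j : ℕ):ℝ)*A) = ((t:ℝ)+1)*ε := by
        have hval : ((F j + t * F j : ℕ):ℝ)*A
            = ((t:ℝ)+1)*ε + (((t+1) * Nat.fib j : ℤ) : ℝ) := by
          push_cast
          linear_combination ((t:ℝ)+1) * hfmA
        rw [hval, Int.fract_add_intCast, Int.fract_eq_self.mpr ⟨by positivity, by nlinarith⟩]
      rw [hfr_t, hfr_m]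
      exact iff_of_false (by push_neg; nlinarith) (by push_neg; nlinarith)
    refine ⟨⟨⟨F j, hFpos, le_refl _, hpowm⟩, ?_⟩, hpowm, ?_⟩
    · -- upper bound
      rintro k ⟨i, hi1, hi2, hpow⟩
      rw [power_iff] at hpow
      have hi2R : (i:ℝ) ≤ (Nat.fib (j+1):ℝ) := by exact_mod_cast hi2
      have hx1 : ε ≤ Int.fract ((i:ℝ)*A) := key (j+1) i hi1 hi2R
      set x := Int.fract ((i:ℝ)*A) with hx
      have hx0 : 0 ≤ x := Int.fract_nonneg _
      have hxlt1 : x < 1 := Int.fract_lt_one _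
      by_cases hc : x < 1 - ε
      · set t := ⌈(1-ε-x)/ε⌉₊ with htdef
        have harg0 : 0 ≤ (1-ε-x)/ε := div_nonneg (by linarith) hε0.le
        have htle : (1-ε-x)/ε ≤ (t:ℝ) := Nat.le_ceil _
        have htlt : (t:ℝ) < (1-ε-x)/ε + 1 := Nat.ceil_lt_add_one harg0
        have hb1 : 1 - ε ≤ x + (t:ℝ)*ε := by
          have := (div_le_iff₀ hε0).mp htle
          linarith
        have hb2 : x + (t:ℝ)*ε < 1 := by
          have h2 : ((1-ε-x)/ε)*ε = 1-ε-x := by field_simp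
          nlinarith [hε0]
        have htL : t < L := by
          have hr : (t:ℝ) < (L:ℝ) := by nlinarith [hε0, hx1]
          exact_mod_cast hr
        rcases le_or_gt k t with hk | hk
        · omega
        · exfalso
          have hiff := hpow t hk
          have hval : ((i + t * F j : ℕ):ℝ)*A
              = (x + (t:ℝ)*ε) + ((⌊(i:ℝ)*A⌋ + t * Nat.fib j : ℤ) : ℝ) := by
            push_cast
            linear_combination hif i + (t:ℝ) * hfmA
          have hfr_i : Int.fract (((i + t * F j : ℕ):ℝ)*A) = x + (t:ℝ)*ε := by
            rw [hval, Int.fract_add_intCast, Int.fract_eq_self.mpr ⟨by positivity, hb2⟩]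
          rw [hfr_i, hfr_m] at hiff
          have := hiff.mp (by linarith)
          linarith
      · push_neg at hc
        rcases le_or_gt k 1 with hk | hk
        · omega
        · exfalso
          have hiff := hpow 1 hk
          have hval : ((i + 1 * F j : ℕ):ℝ)*A
              = (x + ε - 1) + ((⌊(i:ℝ)*A⌋ + Nat.fib j + 1 : ℤ) : ℝ) := by
            push_cast
            linear_combination hif i + hfmA
          have hfr_i : Int.fract (((i + 1 * F j : ℕ):ℝ)*A) = x + ε - 1 := by
            rw [hval, Int.fract_add_intCast, Int.fract_eq_self.mpr ⟨by linarith, by linarith⟩]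
          rw [hfr_i, hfr_m] at hiff
          have := hiff.mpr (by linarith)
          linarith
    · -- value
      rw [if_pos he, hFj2, hFj1] <;> omega
  -- ===================== ODD CASE =====================
  · have hnp : ((-A):ℝ)^(j+1) = ε := by rw [(Odd.add_one ho).neg_pow]
    have hG1 : G^(j+1) = (L:ℝ) - ε := by rw [hLreal, hnp]; ring
    have hLe : (L:ℝ) * ε = 1 + ε^2 := by linear_combination hεG - ε * hG1
    have hfloor : ⌊G * (F j : ℝ) + (F (j-1) : ℝ)⌋₊ = L - 1 := by
      rw [hgold, hG1]
      rw [Nat.floor_eq_iff (by linarith)]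
      have hcast : ((L - 1 : ℕ) : ℝ) = (L:ℝ) - 1 := by
        push_cast [Nat.cast_sub (by omega : 1 ≤ L)]
        ring
      rw [hcast]
      constructor
      · linarith
      · linarith
    rw [hfloor, show L - 1 - 1 = L - 2 from by omega]
    have hfmA : (F j : ℝ) * A = (Nat.fib j : ℝ) - ε := by
      rw [hFcast, fibA j, hnp]
    have hfr_m : Int.fract ((F j:ℝ)*A) = 1 - ε := by
      rw [hfmA, show (Nat.fib j : ℝ) - ε = (1 - ε) + (((Nat.fib j : ℤ) - 1 : ℤ) : ℝ) from by push_cast; ring,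
        Int.fract_add_intCast, Int.fract_eq_self.mpr ⟨by linarith, by linarith⟩]
    have hpowm : HasAbelianPowerAt A (F j) (F j) (L - 2) := by
      rw [power_iff]
      intro t ht
      have htR : (t:ℝ) + 3 ≤ (L:ℝ) := by exact_mod_cast (show t + 3 ≤ L by omega)
      have hfr_t : Int.fract (((F j + t * F j : ℕ):ℝ)*A) = 1 - ((t:ℝ)+1)*ε := by
        have hval : ((F j + t * F j : ℕ):ℝ)*A
            = (1 - ((t:ℝ)+1)*ε) + ((((t:ℤ)+1) * (Nat.fib j : ℤ) - 1 : ℤ) : ℝ) := by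
          push_cast
          linear_combination ((t:ℝ)+1) * hfmA
        rw [hval, Int.fract_add_intCast, Int.fract_eq_self.mpr ⟨by nlinarith, by nlinarith⟩]
      rw [hfr_t, hfr_m]
      exact iff_of_true (by nlinarith) (by nlinarith)
    refine ⟨⟨⟨F j, hFpos, le_refl _, hpowm⟩, ?_⟩, hpowm, ?_⟩
    · rintro k ⟨i, hi1, hi2, hpow⟩
      rw [power_iff] at hpow
      have hi2R : (i:ℝ) ≤ (Nat.fib (j+1):ℝ) := by exact_mod_cast hi2
      have hx1 : ε ≤ Int.fract ((i:ℝ)*A) := key (j+1) i hi1 hi2R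
      have hx2 : Int.fract ((i:ℝ)*A) ≤ 1 - ε := upper j ho i hi1 hi2
      set x := Int.fract ((i:ℝ)*A) with hx
      set t := ⌊x / ε⌋₊ with htdef
      have hxe0 : 0 ≤ x / ε := div_nonneg (by linarith) hε0.le
      have ht1 : (t:ℝ)*ε ≤ x := by
        have h := Nat.floor_le hxe0
        have h2 : ((t:ℝ))*ε ≤ (x/ε)*ε := by nlinarith [hε0]
        have h3 : (x/ε)*ε = x := by field_simp
        linarith
      have ht2 : x < ((t:ℝ)+1)*ε := by
        have h := Nat.lt_floor_add_one (x/ε)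
        have := (div_lt_iff₀ hε0).mp h
        linarith
      have htN : t + 2 ≤ L := by
        have hr : (t:ℝ) < (L:ℝ) - 1 := by
          have h1 : (t:ℝ) ≤ x/ε := Nat.floor_le hxe0
          have h2 : x/ε < (L:ℝ) - 1 := by
            rw [div_lt_iff₀ hε0]
            nlinarith [hε0]
          linarith
        have : (t:ℝ) + 1 < (L:ℝ) := by linarith
        have : t + 1 < L := by exact_mod_cast this
        omega
      rcases le_or_gt k t with hk | hk
      · omega
      · exfalso
        have hiff := hpow t hk
        have hval : ((i + t * F j : ℕ):ℝ)*A
            = (x - (t:ℝ)*ε) + ((⌊(i:ℝ)*A⌋ + t * Nat.fib j : ℤ) : ℝ) := by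
          push_cast
          linear_combination hif i + (t:ℝ) * hfmA
        have hfr_i : Int.fract (((i + t * F j : ℕ):ℝ)*A) = x - (t:ℝ)*ε := by
          rw [hval, Int.fract_add_intCast, Int.fract_eq_self.mpr ⟨by linarith, by nlinarith⟩]
        rw [hfr_i, hfr_m] at hiff
        have := hiff.mpr (by linarith)
        nlinarith
    · rw [if_neg (by simpa using Nat.not_even_iff_odd.mpr ho), hFj2, hFj1] <;> omega
end
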